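/- Let B(F,f,A,v) = (p/(p-1))^p F − (p^p/(p-1)) f^p/(A+(p-1)v)^(p-1) on D. For (F,f,A,v) ∈ D and 0 ≤ c < A with (F,f,A−c,v) ∈ D, one has B(F,f,A,v) − B(F,f,A−c,v) ≥ p^p · f^p/(A+(p-1)v)^p · c. -/

import Mathlib

/-- Key pointwise inequality: for `0 < t ≤ s` and `1 < p`,
`s ^ p ≥ t ^ (p-1) * (p * s - (p-1) * t)` (Bernoulli). -/
lemma bellman_core (p : ℝ) (hp : 1 < p) (t s : ℝ) (ht : 0 < t) (hts : t ≤ s) :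
    t ^ (p - 1) * (p * s - (p - 1) * t) ≤ s ^ p := by
  have hs : 0 < s := ht.trans_le hts
  have hw : (1 : ℝ) ≤ s / t := (one_le_div ht).mpr hts
  have hb := one_add_mul_self_le_rpow_one_add (s := s / t - 1)
      (by linarith) (p := p) hp.le
  rw [add_sub_cancel] at hb
  have hdiv : (s / t) ^ p = s ^ p / t ^ p := Real.div_rpow hs.le ht.le p
  rw [hdiv] at hb
  have htp : (0 : ℝ) < t ^ p := Real.rpow_pos_of_pos ht p
  have htp1 : (0 : ℝ) < t ^ (p - 1) := Real.rpow_pos_of_pos ht (p - 1)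
  have hsplit : t ^ p = t ^ (p - 1) * t := by
    nth_rewrite 1 [show p = (p - 1) + 1 by ring]
    rw [Real.rpow_add ht, Real.rpow_one]
  have h1 : t ^ p * (1 + p * (s / t - 1)) ≤ s ^ p := by
    rw [mul_comm]
    exact (le_div_iff₀ htp).mp hb
  have h2 : t ^ p * (1 + p * (s / t - 1))
      = t ^ (p - 1) * (p * s - (p - 1) * t) := by
    rw [hsplit]
    field_simp
    ring
  linarith [h2 ▸ h1]

/-- Derivative-type inequality: `1/t^(p-1) - 1/s^(p-1) ≥ (p-1)(s-t)/s^p`. -/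
lemma bellman_core2 (p : ℝ) (hp : 1 < p) (t s : ℝ) (ht : 0 < t) (hts : t ≤ s) :
    (p - 1) * (s - t) / s ^ p ≤ 1 / t ^ (p - 1) - 1 / s ^ (p - 1) := by
  have hs : 0 < s := ht.trans_le hts
  have htp1 : (0 : ℝ) < t ^ (p - 1) := Real.rpow_pos_of_pos ht (p - 1)
  have hsp1 : (0 : ℝ) < s ^ (p - 1) := Real.rpow_pos_of_pos hs (p - 1)
  have hsp : (0 : ℝ) < s ^ p := Real.rpow_pos_of_pos hs p
  have hcore := bellman_core p hp t s ht hts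
  have hssplit : s ^ p = s ^ (p - 1) * s := by
    nth_rewrite 1 [show p = (p - 1) + 1 by ring]
    rw [Real.rpow_add hs, Real.rpow_one]
  rw [div_le_iff₀ hsp]
  have e1 : 1 / s ^ (p - 1) * s ^ p = s := by rw [hssplit]; field_simp
  have e : (1 / t ^ (p - 1) - 1 / s ^ (p - 1)) * s ^ p
      = s ^ p / t ^ (p - 1) - s := by rw [sub_mul, e1]; ring
  rw [e, le_sub_iff_add_le, le_div_iff₀ htp1]
  linear_combination hcore

theorem bellman_drift_increment (p : ℝ) (hp : 1 < p) (F f A v c : ℝ)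
    (hF : 0 ≤ F) (hf : 0 ≤ f) (hA : 0 < A) (hv : 0 < v) (hAv : A ≤ v)
    (hFv : f ^ p ≤ F * v ^ (p - 1)) (hc : 0 ≤ c) (hcA : c < A)
    (hAcv : A - c ≤ v) :
    ((p / (p - 1)) ^ p * F - (p ^ p / (p - 1)) * f ^ p / (A + (p - 1) * v) ^ (p - 1)) -
      ((p / (p - 1)) ^ p * F - (p ^ p / (p - 1)) * f ^ p / (A - c + (p - 1) * v) ^ (p - 1)) ≥
      p ^ p * f ^ p / (A + (p - 1) * v) ^ p * c := by
  set s := A + (p - 1) * v with hsdef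
  set t := A - c + (p - 1) * v with htdef
  have hp1 : (0 : ℝ) < p - 1 := by linarith
  have ht : 0 < t := by rw [htdef]; nlinarith [mul_pos hp1 hv]
  have hts : t ≤ s := by rw [htdef, hsdef]; linarith
  have hs : 0 < s := ht.trans_le hts
  have hst : s - t = c := by rw [htdef, hsdef]; ring
  have hcore := bellman_core2 p hp t s ht hts
  rw [hst] at hcore
  have hfp : (0 : ℝ) ≤ f ^ p := Real.rpow_nonneg hf p
  have hpp : (0 : ℝ) < p ^ p := Real.rpow_pos_of_pos (by linarith) p
  have hK : (0 : ℝ) ≤ p ^ p / (p - 1) * f ^ p := by positivity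
  have hmul := mul_le_mul_of_nonneg_left hcore hK
  have htp1 : (0 : ℝ) < t ^ (p - 1) := Real.rpow_pos_of_pos ht (p - 1)
  have hsp1 : (0 : ℝ) < s ^ (p - 1) := Real.rpow_pos_of_pos hs (p - 1)
  have hsp : (0 : ℝ) < s ^ p := Real.rpow_pos_of_pos hs p
  have hL : p ^ p / (p - 1) * f ^ p * (1 / t ^ (p - 1) - 1 / s ^ (p - 1))
      = p ^ p / (p - 1) * f ^ p / t ^ (p - 1) - p ^ p / (p - 1) * f ^ p / s ^ (p - 1) := by
    ring
  have hR : p ^ p / (p - 1) * f ^ p * ((p - 1) * c / s ^ p)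
      = p ^ p * f ^ p / s ^ p * c := by
    field_simp
  rw [hL, hR] at hmul
  linarith
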